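/- Let f_p, f_q : ℝ^D → ℝ be nonnegative and integrable with finite second moments, number densities n_p, n_q > 0, mean velocities v̄_p, v̄_q, particle masses m_p, m_q > 0, and set ρ_p = m_p n_p, ρ_q = m_q n_q. Let ν_{p,q}, ν_{q,p} > 0 and T, T' > 0 be arbitrary, and for u ∈ ℝ^D let M_{p,q} be the Maxwellian with mass m_p, density n_p, mean u and temperature T, and M_{q,p} the Maxwellian with mass m_q, density n_q, mean u and temperature T'. Then the momentum exchange balance m_p ∫ v · ν_{p,q}(M_{p,q}(v) − f_p(v)) dv + m_q ∫ v · ν_{q,p}(M_{q,p}(v) − f_q(v)) dv = 0 holds if and only if u = (ρ_p ν_{p,q} v̄_p + ρ_q ν_{q,p} v̄_q)/(ρ_p ν_{p,q} + ρ_q ν_{q,p}). -/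

import Mathlib

open MeasureTheory

/-- The Maxwellian distribution with number density `n`, mean velocity `vb`,
temperature `T` and particle mass `m` on `ℝ^D`. -/
noncomputable def maxwellian (D : ℕ) (m n T : ℝ) (vb : EuclideanSpace ℝ (Fin D))
    (v : EuclideanSpace ℝ (Fin D)) : ℝ :=
  n * (m / (2 * Real.pi * T)) ^ ((D : ℝ) / 2) * Real.exp (-(m * ‖v - vb‖ ^ 2) / (2 * T))

section aux
variable {D : ℕ}

local notation "E" => EuclideanSpace ℝ (Fin D)

lemma gauss_int {b : ℝ} (hb : 0 < b) :
    Integrable (fun v : E => Real.exp (-b * ‖v‖ ^ 2)) := by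
  have h := (GaussianFourier.integrable_cexp_neg_mul_sq_norm_add
    (V := E) (b := (b : ℂ)) (by simpa using hb) 0 0).norm
  refine h.congr (Filter.Eventually.of_forall fun v => ?_)
  simp [Complex.norm_exp, ← Complex.ofReal_pow]

lemma gauss_mom_int {b : ℝ} (hb : 0 < b) :
    Integrable (fun v : E => Real.exp (-b * ‖v‖ ^ 2) • v) := by
  have hcont : Continuous (fun v : E => Real.exp (-b * ‖v‖ ^ 2) • v) := by
    fun_prop
  have hint : Integrable (fun v : E => (1 + 2 / b) * Real.exp (-(b / 2) * ‖v‖ ^ 2)) :=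
    (gauss_int (by positivity)).const_mul _
  refine hint.mono' hcont.aestronglyMeasurable (Filter.Eventually.of_forall fun v => ?_)
  rw [norm_smul, Real.norm_eq_abs, abs_of_pos (Real.exp_pos _)]
  have h1 : ‖v‖ ≤ 1 + ‖v‖ ^ 2 := by nlinarith [norm_nonneg v, sq_nonneg (‖v‖ - 1)]
  have hs : Real.exp (-b * ‖v‖ ^ 2) = Real.exp (-(b/2) * ‖v‖ ^ 2) * Real.exp (-(b/2) * ‖v‖ ^ 2) := by
    rw [← Real.exp_add]; ring_nf
  have hkey : Real.exp (-(b/2) * ‖v‖ ^ 2) * ‖v‖ ≤ 1 + 2 / b := by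
    have hb2 : (0:ℝ) < b / 2 := by positivity
    have ht : (b/2) * ‖v‖ ^ 2 ≤ Real.exp ((b/2) * ‖v‖ ^ 2) := by
      linarith [Real.add_one_le_exp ((b/2) * ‖v‖ ^ 2)]
    have hexp1 : Real.exp (-(b/2) * ‖v‖ ^ 2) ≤ 1 := by
      rw [Real.exp_le_one_iff]; nlinarith [sq_nonneg ‖v‖]
    have h2 : Real.exp (-(b/2) * ‖v‖ ^ 2) * ‖v‖ ^ 2 ≤ 2 / b := by
      rw [neg_mul, Real.exp_neg]
      rw [inv_mul_le_iff₀ (Real.exp_pos _)]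
      calc ‖v‖ ^ 2 = (2 / b) * ((b/2) * ‖v‖ ^ 2) := by field_simp
        _ ≤ (2 / b) * Real.exp ((b/2) * ‖v‖ ^ 2) := by
            apply mul_le_mul_of_nonneg_left ht (by positivity)
        _ = Real.exp ((b/2) * ‖v‖ ^ 2) * (2 / b) := by ring
    calc Real.exp (-(b/2) * ‖v‖ ^ 2) * ‖v‖
        ≤ Real.exp (-(b/2) * ‖v‖ ^ 2) * (1 + ‖v‖ ^ 2) := by
          apply mul_le_mul_of_nonneg_left h1 (Real.exp_pos _).le
      _ = Real.exp (-(b/2) * ‖v‖ ^ 2) + Real.exp (-(b/2) * ‖v‖ ^ 2) * ‖v‖ ^ 2 := by ring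
      _ ≤ 1 + 2 / b := add_le_add hexp1 h2
  calc Real.exp (-b * ‖v‖ ^ 2) * ‖v‖
      = Real.exp (-(b/2) * ‖v‖ ^ 2) * (Real.exp (-(b/2) * ‖v‖ ^ 2) * ‖v‖) := by
        rw [hs]; ring
    _ ≤ Real.exp (-(b/2) * ‖v‖ ^ 2) * (1 + 2 / b) := by
        apply mul_le_mul_of_nonneg_left hkey (Real.exp_pos _).le
    _ = (1 + 2 / b) * Real.exp (-(b/2) * ‖v‖ ^ 2) := by ring

lemma gauss_mom_zero {b : ℝ} (hb : 0 < b) :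
    (∫ v : E, Real.exp (-b * ‖v‖ ^ 2) • v) = 0 := by
  have h := integral_neg_eq_self (fun v : E => Real.exp (-b * ‖v‖ ^ 2) • v) volume
  simp only [norm_neg, smul_neg] at h
  rw [integral_neg] at h
  have : (2:ℝ) • (∫ v : E, Real.exp (-b * ‖v‖ ^ 2) • v) = 0 := by
    rw [two_smul]
    nth_rewrite 1 [← h]
    simp
  simpa [smul_eq_zero] using this

end aux

section max
variable {D : ℕ}
local notation "E" => EuclideanSpace ℝ (Fin D)

lemma max_eq (m n T : ℝ) (u : E) (v : E) :
    maxwellian D m n T u v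
      = (n * (m / (2 * Real.pi * T)) ^ ((D : ℝ) / 2)) * Real.exp (-(m / (2 * T)) * ‖v - u‖ ^ 2) := by
  unfold maxwellian
  congr 1
  congr 1
  ring

lemma const_fact {m T : ℝ} (hm : 0 < m) (hT : 0 < T) :
    (m / (2 * Real.pi * T)) ^ ((D : ℝ) / 2) * (Real.pi / (m / (2 * T))) ^ ((D : ℝ) / 2) = 1 := by
  have hπ := Real.pi_pos
  rw [← Real.mul_rpow (by positivity) (by positivity)]
  have : m / (2 * Real.pi * T) * (Real.pi / (m / (2 * T))) = 1 := by
    field_simp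
  rw [this, Real.one_rpow]

lemma max_int {m T : ℝ} (n : ℝ) (hm : 0 < m) (hT : 0 < T) (u : E) :
    Integrable (maxwellian D m n T u) := by
  have hb : 0 < m / (2 * T) := by positivity
  have h := (((gauss_int (D := D) hb).const_mul
    (n * (m / (2 * Real.pi * T)) ^ ((D : ℝ) / 2)))).comp_sub_right u
  exact h.congr (Filter.Eventually.of_forall fun v => (max_eq m n T u v).symm)

lemma max_integral {m T : ℝ} (n : ℝ) (hm : 0 < m) (hT : 0 < T) (u : E) :
    (∫ v : E, maxwellian D m n T u v) = n := by
  have hb : 0 < m / (2 * T) := by positivity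
  simp only [max_eq m n T u]
  have key : (∫ v : E, (n * (m / (2 * Real.pi * T)) ^ ((D : ℝ) / 2)) *
        Real.exp (-(m / (2 * T)) * ‖v - u‖ ^ 2))
      = ∫ w : E, (n * (m / (2 * Real.pi * T)) ^ ((D : ℝ) / 2)) *
        Real.exp (-(m / (2 * T)) * ‖w‖ ^ 2) :=
    integral_sub_right_eq_self (fun w : E => (n * (m / (2 * Real.pi * T)) ^ ((D : ℝ) / 2)) *
      Real.exp (-(m / (2 * T)) * ‖w‖ ^ 2)) u
  rw [key, integral_const_mul,
    GaussianFourier.integral_rexp_neg_mul_sq_norm hb, finrank_euclideanSpace_fin]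
  rw [mul_assoc, const_fact hm hT, mul_one]

lemma max_mom_int {m T : ℝ} (n : ℝ) (hm : 0 < m) (hT : 0 < T) (u : E) :
    Integrable (fun v : E => maxwellian D m n T u v • v) := by
  have hb : 0 < m / (2 * T) := by positivity
  set c := n * (m / (2 * Real.pi * T)) ^ ((D : ℝ) / 2) with hc
  have h1 : Integrable (fun w : E => c • (Real.exp (-(m / (2 * T)) * ‖w‖ ^ 2) • w)) :=
    (gauss_mom_int hb).smul c
  have h2 : Integrable (fun w : E => (c * Real.exp (-(m / (2 * T)) * ‖w‖ ^ 2)) • u) :=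
    ((gauss_int (D := D) hb).const_mul c).smul_const u
  have h := ((h1.add h2).comp_sub_right u)
  refine h.congr (Filter.Eventually.of_forall fun v => ?_)
  show c • (Real.exp (-(m / (2 * T)) * ‖v - u‖ ^ 2) • (v - u))
      + (c * Real.exp (-(m / (2 * T)) * ‖v - u‖ ^ 2)) • u = maxwellian D m n T u v • v
  rw [max_eq m n T u v, smul_smul, ← smul_add]
  congr 1
  abel

lemma max_mom {m T : ℝ} (n : ℝ) (hm : 0 < m) (hT : 0 < T) (u : E) :
    (∫ v : E, maxwellian D m n T u v • v) = n • u := by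
  have hb : 0 < m / (2 * T) := by positivity
  set c := n * (m / (2 * Real.pi * T)) ^ ((D : ℝ) / 2) with hc
  have h1 : Integrable (fun w : E => c • (Real.exp (-(m / (2 * T)) * ‖w‖ ^ 2) • w)) :=
    (gauss_mom_int hb).smul c
  have h2 : Integrable (fun w : E => (c * Real.exp (-(m / (2 * T)) * ‖w‖ ^ 2)) • u) :=
    ((gauss_int (D := D) hb).const_mul c).smul_const u
  have hfun : (fun v : E => maxwellian D m n T u v • v)
      = (fun v : E => (fun w : E => c • (Real.exp (-(m / (2 * T)) * ‖w‖ ^ 2) • w)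
          + (c * Real.exp (-(m / (2 * T)) * ‖w‖ ^ 2)) • u) (v - u)) := by
    funext v
    show maxwellian D m n T u v • v
        = c • (Real.exp (-(m / (2 * T)) * ‖v - u‖ ^ 2) • (v - u))
          + (c * Real.exp (-(m / (2 * T)) * ‖v - u‖ ^ 2)) • u
    rw [max_eq m n T u v, smul_smul, ← smul_add]
    congr 1
    abel
  rw [hfun]
  have key : (∫ v : E, (fun w : E => c • (Real.exp (-(m / (2 * T)) * ‖w‖ ^ 2) • w)
          + (c * Real.exp (-(m / (2 * T)) * ‖w‖ ^ 2)) • u) (v - u))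
      = ∫ w : E, (c • (Real.exp (-(m / (2 * T)) * ‖w‖ ^ 2) • w)
          + (c * Real.exp (-(m / (2 * T)) * ‖w‖ ^ 2)) • u) :=
    integral_sub_right_eq_self (fun w : E => c • (Real.exp (-(m / (2 * T)) * ‖w‖ ^ 2) • w)
          + (c * Real.exp (-(m / (2 * T)) * ‖w‖ ^ 2)) • u) u
  rw [key, integral_add h1 h2, integral_smul, gauss_mom_zero hb, smul_zero, zero_add,
    integral_smul_const, integral_const_mul,
    GaussianFourier.integral_rexp_neg_mul_sq_norm hb, finrank_euclideanSpace_fin]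
  congr 1
  rw [hc, mul_assoc, const_fact hm hT, mul_one]

end max

/-- The interspecies momentum exchange of the multispecies BGK operator balances
if and only if the common mixture mean velocity `u` is the weighted average
`(ρ_p ν_{p,q} v̄_p + ρ_q ν_{q,p} v̄_q)/(ρ_p ν_{p,q} + ρ_q ν_{q,p})`. -/
theorem bgk_mixture_velocity
    (D : ℕ) (hD : 1 ≤ D) (mp mq : ℝ) (hmp : 0 < mp) (hmq : 0 < mq)
    (fp fq : EuclideanSpace ℝ (Fin D) → ℝ)
    (hfp_nonneg : ∀ v, 0 ≤ fp v) (hfq_nonneg : ∀ v, 0 ≤ fq v)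
    (hfp_int : Integrable fp) (hfq_int : Integrable fq)
    (hfp_mom : Integrable (fun v => fp v • v))
    (hfq_mom : Integrable (fun v => fq v • v))
    (hfp_en : Integrable (fun v => ‖v‖ ^ 2 * fp v))
    (hfq_en : Integrable (fun v => ‖v‖ ^ 2 * fq v))
    (np nq : ℝ) (hnp_def : np = ∫ v, fp v) (hnq_def : nq = ∫ v, fq v)
    (hnp : 0 < np) (hnq : 0 < nq)
    (vbp vbq : EuclideanSpace ℝ (Fin D))
    (hvbp : np • vbp = ∫ v, fp v • v) (hvbq : nq • vbq = ∫ v, fq v • v)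
    (ρp ρq : ℝ) (hρp : ρp = mp * np) (hρq : ρq = mq * nq)
    (νpq νqp : ℝ) (hνpq : 0 < νpq) (hνqp : 0 < νqp)
    (T T' : ℝ) (hT : 0 < T) (hT' : 0 < T')
    (u : EuclideanSpace ℝ (Fin D)) :
    (∫ v, (mp * (νpq * (maxwellian D mp np T u v - fp v))) • v)
      + (∫ v, (mq * (νqp * (maxwellian D mq nq T' u v - fq v))) • v) = 0 ↔
    u = (ρp * νpq + ρq * νqp)⁻¹ • ((ρp * νpq) • vbp + (ρq * νqp) • vbq) := by

  have key : ∀ (m ν n T : ℝ), 0 < m → 0 < T →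
      ∀ (f : EuclideanSpace ℝ (Fin D) → ℝ), Integrable (fun v => f v • v) →
      (∫ v, (m * (ν * (maxwellian D m n T u v - f v))) • v)
        = (m * ν) • ((n • u) - ∫ v, f v • v) := by
    intro m ν n T hm hT f hf
    have e1 : (fun v : EuclideanSpace ℝ (Fin D) =>
        (m * (ν * (maxwellian D m n T u v - f v))) • v)
        = fun v => (m * ν) • (maxwellian D m n T u v • v) - (m * ν) • (f v • v) := by
      funext v
      rw [show m * (ν * (maxwellian D m n T u v - f v))
          = (m * ν) * (maxwellian D m n T u v - f v) by ring,
        mul_smul, sub_smul, smul_sub]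
    have hI1 : Integrable (fun v : EuclideanSpace ℝ (Fin D) =>
        (m * ν) • (maxwellian D m n T u v • v)) := (max_mom_int n hm hT u).smul (m * ν)
    have hI2 : Integrable (fun v : EuclideanSpace ℝ (Fin D) => (m * ν) • (f v • v)) :=
      hf.smul (m * ν)
    rw [e1, integral_sub hI1 hI2, integral_smul, integral_smul, max_mom n hm hT u, ← smul_sub]
  rw [key mp νpq np T hmp hT fp hfp_mom, key mq νqp nq T' hmq hT' fq hfq_mom,
    ← hvbp, ← hvbq]
  have hc : ρp * νpq + ρq * νqp ≠ 0 := by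
    have : 0 < ρp * νpq + ρq * νqp := by
      rw [hρp, hρq]; positivity
    exact ne_of_gt this
  have hL : (mp * νpq) • (np • u - np • vbp) + (mq * νqp) • (nq • u - nq • vbq)
      = (ρp * νpq + ρq * νqp) • u - ((ρp * νpq) • vbp + (ρq * νqp) • vbq) := by
    rw [hρp, hρq]
    module
  rw [hL, sub_eq_zero]
  exact (eq_inv_smul_iff₀ hc).symm
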